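/- Let f : {-1,1}^n → {-1,1} be a locally p-biased function and let c ≥ 1 be an integer. Define f' : {-1,1}^{cn} → {-1,1} by f'(x) = f(∏_{j=0}^{c-1} x_{1+jn}, …, ∏_{j=0}^{c-1} x_{n+jn}). Then f' is a locally p-biased function on {-1,1}^{cn}. -/

import Mathlib

/-- A point of the Boolean hypercube `{-1,1}^n`, encoded inside `Fin n → ℤ`. -/
def IsPMOne {n : ℕ} (x : Fin n → ℤ) : Prop := ∀ i, x i = 1 ∨ x i = -1

/-- `f` is locally `p`-biased: it takes values in `{-1,1}` on the cube, and for every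
vertex `x` of the cube, exactly `p·n` of the `n` neighbors of `x` satisfy `f y = 1`. -/
def LocallyBiased (n : ℕ) (p : ℝ) (f : (Fin n → ℤ) → ℤ) : Prop :=
  (∀ x : Fin n → ℤ, IsPMOne x → (f x = 1 ∨ f x = -1)) ∧
  ∀ x : Fin n → ℤ, IsPMOne x →
    ((Finset.univ.filter fun i => f (Function.update x i (-(x i))) = 1).card : ℝ) = p * n

theorem stmt_5 (n c : ℕ) (hn : 1 ≤ n) (hc : 1 ≤ c) (p : ℝ)
    (f : (Fin n → ℤ) → ℤ) (hf : LocallyBiased n p f)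
    (f' : (Fin (c * n) → ℤ) → ℤ)
    -- `f' x = f (∏_j x_{1+jn}, …, ∏_j x_{n+jn})`
    (hf' : ∀ x : Fin (c * n) → ℤ,
      f' x = f (fun i => ∏ j : Fin c,
        x ⟨i.1 + j.1 * n, by
          calc i.1 + j.1 * n < n + j.1 * n := by omega
            _ = (j.1 + 1) * n := by ring
            _ ≤ c * n := Nat.mul_le_mul j.isLt (le_refl n)⟩)) :
    LocallyBiased (c * n) p f' := by
  obtain ⟨hf1, hf2⟩ := hf
  have hn0 : 0 < n := hn
  have hlt : ∀ (i : Fin n) (j : Fin c), i.1 + j.1 * n < c * n := by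
    intro i j
    calc i.1 + j.1 * n < n + j.1 * n := by omega
      _ = (j.1 + 1) * n := by ring
      _ ≤ c * n := Nat.mul_le_mul j.isLt (le_refl n)
  set idx : Fin n → Fin c → Fin (c * n) := fun i j => ⟨i.1 + j.1 * n, hlt i j⟩ with hidx
  set g : (Fin (c * n) → ℤ) → Fin n → ℤ := fun x i => ∏ j : Fin c, x (idx i j) with hgdef
  have hg : ∀ x, f' x = f (g x) := hf'
  have hgpm : ∀ x, IsPMOne x → IsPMOne (g x) := by
    intro x hx i
    rw [← Int.isUnit_iff]
    exact Finset.univ.prod_induction _ IsUnit (fun _ _ => IsUnit.mul) isUnit_one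
      (fun j _ => Int.isUnit_iff.mpr (hx (idx i j)))
  -- residue map
  set rk : Fin (c * n) → Fin n := fun k => ⟨k.1 % n, Nat.mod_lt _ hn0⟩ with hrk
  have hrkidx : ∀ (i : Fin n) (j : Fin c), rk (idx i j) = i := by
    intro i j
    apply Fin.ext
    simp only [hrk, hidx]
    rw [Nat.add_mul_mod_self_right, Nat.mod_eq_of_lt i.isLt]
  have key : ∀ (x : Fin (c * n) → ℤ) (k : Fin (c * n)),
      g (Function.update x k (-(x k))) = Function.update (g x) (rk k) (-(g x (rk k))) := by
    intro x k
    funext i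
    by_cases hik : i = rk k
    · subst hik
      rw [Function.update_self]
      set j0 : Fin c := ⟨k.1 / n, Nat.div_lt_of_lt_mul (k.isLt.trans_eq (Nat.mul_comm c n))⟩ with hj0
      have hidx0 : idx (rk k) j0 = k := by
        apply Fin.ext
        simp only [hidx, hrk, hj0]
        exact Nat.mod_add_div' k.1 n
      have hne : ∀ j : Fin c, j ≠ j0 → idx (rk k) j ≠ k := by
        intro j hj hkeq
        apply hj
        apply Fin.ext
        have h1 : k.1 % n + j.1 * n = k.1 := congrArg Fin.val hkeq
        have h2 : k.1 % n + (k.1 / n) * n = k.1 := Nat.mod_add_div' k.1 n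
        have : j.1 * n = (k.1 / n) * n := by omega
        exact Nat.eq_of_mul_eq_mul_right hn0 this
      have step : ∀ j : Fin c,
          Function.update x k (-(x k)) (idx (rk k) j)
            = (if j = j0 then (-1 : ℤ) else 1) * x (idx (rk k) j) := by
        intro j
        by_cases hj : j = j0
        · subst hj
          rw [hidx0, Function.update_self, if_pos rfl]
          ring
        · rw [Function.update_of_ne (hne j hj), if_neg hj, one_mul]
      show (∏ j : Fin c, Function.update x k (-(x k)) (idx (rk k) j)) = -(g x (rk k))
      rw [Finset.prod_congr rfl (fun j _ => step j), Finset.prod_mul_distrib]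
      have : (∏ j : Fin c, if j = j0 then (-1 : ℤ) else 1) = -1 := by
        rw [Finset.prod_ite_eq' Finset.univ j0 (fun _ => (-1 : ℤ))]
        simp
      rw [this]
      ring
    · rw [Function.update_of_ne hik]
      show (∏ j : Fin c, Function.update x k (-(x k)) (idx i j)) = g x i
      refine Finset.prod_congr rfl fun j _ => ?_
      apply Function.update_of_ne
      intro hkeq
      exact hik (by rw [← hkeq, hrkidx])
  constructor
  · intro x hx
    rw [hg]
    exact hf1 _ (hgpm x hx)
  · intro x hx
    have heq : ∀ k : Fin (c * n),
        (f' (Function.update x k (-(x k))) = 1)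
          ↔ (f (Function.update (g x) (rk k) (-(g x (rk k)))) = 1) := by
      intro k
      rw [hg, key]
    set S := Finset.univ.filter fun i : Fin n =>
      f (Function.update (g x) i (-(g x i))) = 1 with hS
    have hfilter : (Finset.univ.filter fun k : Fin (c * n) =>
        f' (Function.update x k (-(x k))) = 1)
        = Finset.univ.filter fun k => rk k ∈ S := by
      apply Finset.filter_congr
      intro k _
      rw [heq k, hS]
      simp
    have hcard : (Finset.univ.filter fun k : Fin (c * n) => rk k ∈ S).card
        = c * S.card := by
      have h1 : (Finset.univ.filter fun k : Fin (c * n) => rk k ∈ S).card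
          = ((Finset.univ : Finset (Fin c)) ×ˢ S).card := by
        apply Finset.card_nbij'
          (fun k => (⟨k.1 / n, Nat.div_lt_of_lt_mul (k.isLt.trans_eq (Nat.mul_comm c n))⟩, rk k))
          (fun ab => idx ab.2 ab.1)
        · intro k hk
          rw [Finset.mem_coe, Finset.mem_filter] at hk
          rw [Finset.mem_coe, Finset.mem_product]
          exact ⟨Finset.mem_univ _, hk.2⟩
        · intro ab hab
          rw [Finset.mem_coe, Finset.mem_product] at hab
          rw [Finset.mem_coe, Finset.mem_filter]
          exact ⟨Finset.mem_univ _, by rw [hrkidx]; exact hab.2⟩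
        · intro k _
          apply Fin.ext
          exact Nat.mod_add_div' k.1 n
        · intro ab _
          apply Prod.ext
          · apply Fin.ext
            show (ab.2.1 + ab.1.1 * n) / n = ab.1.1
            rw [Nat.add_mul_div_right _ _ hn0, Nat.div_eq_of_lt ab.2.isLt, zero_add]
          · exact hrkidx ab.2 ab.1
      rw [h1, Finset.card_product, Finset.card_univ, Fintype.card_fin]
    have hSc : (S.card : ℝ) = p * n := hf2 (g x) (hgpm x hx)
    rw [hfilter, hcard]
    push_cast
    rw [hSc]
    ring
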